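/- For every z ∈ ℂ⁵, V(z) > 0; equivalently, the equations ∂W/∂z_i(z) = 0 for i = 1,…,5 (in particular λ(z₄z₅ − m²) = 0, μz₄ = 0, νz₅ = 0) have no common solution, so the CDFM model has no supersymmetric vacuum. -/

import Mathlib

open Complex Filter Topology

/-- The CDFM model: five chiral fields `z₁,…,z₅`, superpotential
`W(z) = λ z₁ (z₄z₅ − m²) + μ z₂ z₄ + ν z₃ z₅ + σ z₅³` with positive real parameters, scalar
potential `V(z) = Σᵢ |∂W/∂z_i(z)|²`. For every `z ∈ ℂ⁵` one has `V(z) > 0`; equivalently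
the equations `∂W/∂z_i(z) = 0`, `i = 1,…,5`, have no common solution: no SUSY vacuum. -/
theorem cdfm_no_susy_vacuum
    (lam mu nu m sig : ℝ)
    (hlam : 0 < lam) (hmu : 0 < mu) (hnu : 0 < nu) (hm : 0 < m) (hsig : 0 < sig)
    (W : (Fin 5 → ℂ) → ℂ)
    (hW : ∀ z, W z = (lam : ℂ) * z 0 * (z 3 * z 4 - (m : ℂ) ^ 2) +
      (mu : ℂ) * z 1 * z 3 + (nu : ℂ) * z 2 * z 4 + (sig : ℂ) * (z 4) ^ 3)
    (V : (Fin 5 → ℂ) → ℝ)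
    (hV : ∀ z, V z = ∑ i, ‖fderiv ℂ W z (Pi.single i 1)‖ ^ 2) :
    (∀ z, 0 < V z) ∧
    ¬ ∃ z : Fin 5 → ℂ, ∀ i, fderiv ℂ W z (Pi.single i 1) = 0 := by
  have hWfun : W = fun z : Fin 5 → ℂ => (lam : ℂ) * z 0 * (z 3 * z 4 - (m : ℂ) ^ 2) +
      (mu : ℂ) * z 1 * z 3 + (nu : ℂ) * z 2 * z 4 + (sig : ℂ) * (z 4) ^ 3 := funext hW
  have hproj : ∀ (z : Fin 5 → ℂ) (i : Fin 5), HasFDerivAt (fun w : Fin 5 → ℂ => w i)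
      (ContinuousLinearMap.proj i : (Fin 5 → ℂ) →L[ℂ] ℂ) z := fun z i =>
    (ContinuousLinearMap.proj i : (Fin 5 → ℂ) →L[ℂ] ℂ).hasFDerivAt
  have hd : ∀ z v : Fin 5 → ℂ, fderiv ℂ W z v =
      (lam : ℂ) * v 0 * (z 3 * z 4 - (m:ℂ)^2) + (lam:ℂ) * z 0 * (z 3 * v 4 + v 3 * z 4)
      + (mu:ℂ) * (z 1 * v 3 + v 1 * z 3) + (nu:ℂ) * (z 2 * v 4 + v 2 * z 4)
      + (sig:ℂ) * (3 * z 4 ^ 2 * v 4) := by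
    intro z v
    have H := (((((hproj z 0).const_mul (lam:ℂ)).mul
        (((hproj z 3).mul (hproj z 4)).sub_const ((m:ℂ)^2))).add
        (((hproj z 1).const_mul (mu:ℂ)).mul (hproj z 3))).add
        (((hproj z 2).const_mul (nu:ℂ)).mul (hproj z 4))).add
        ((((hproj z 4).mul ((hproj z 4).mul (hproj z 4)))).const_mul (sig:ℂ))
    rw [hWfun]
    have heq : (fun z : Fin 5 → ℂ => (lam : ℂ) * z 0 * (z 3 * z 4 - (m : ℂ) ^ 2) +
        (mu : ℂ) * z 1 * z 3 + (nu : ℂ) * z 2 * z 4 + (sig : ℂ) * (z 4) ^ 3) =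
        (fun z : Fin 5 → ℂ => (lam : ℂ) * z 0 * (z 3 * z 4 - (m : ℂ) ^ 2) +
        (mu : ℂ) * z 1 * z 3 + (nu : ℂ) * z 2 * z 4 + (sig : ℂ) * (z 4 * (z 4 * z 4))) := by
      funext w; ring
    rw [heq, HasFDerivAt.fderiv (f := fun z : Fin 5 → ℂ => (lam : ℂ) * z 0 * (z 3 * z 4 - (m : ℂ) ^ 2) +
        (mu : ℂ) * z 1 * z 3 + (nu : ℂ) * z 2 * z 4 + (sig : ℂ) * (z 4 * (z 4 * z 4))) H]
    simp [ContinuousLinearMap.add_apply, ContinuousLinearMap.smul_apply,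
      ContinuousLinearMap.smulRight_apply, ContinuousLinearMap.proj_apply,
      smul_eq_mul]
    ring
  -- helper: explicit values at coordinate directions
  have hv0 : ∀ z : Fin 5 → ℂ, fderiv ℂ W z (Pi.single 0 1) = (lam:ℂ) * (z 3 * z 4 - (m:ℂ)^2) := by
    intro z; rw [hd]; simp [Pi.single_apply]
  have hv1 : ∀ z : Fin 5 → ℂ, fderiv ℂ W z (Pi.single 1 1) = (mu:ℂ) * z 3 := by
    intro z; rw [hd]; simp [Pi.single_apply]
  have hv2 : ∀ z : Fin 5 → ℂ, fderiv ℂ W z (Pi.single 2 1) = (nu:ℂ) * z 4 := by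
    intro z; rw [hd]; simp [Pi.single_apply]
  have hlam' : (lam:ℂ) ≠ 0 := by exact_mod_cast hlam.ne'
  have hmu' : (mu:ℂ) ≠ 0 := by exact_mod_cast hmu.ne'
  have hnu' : (nu:ℂ) ≠ 0 := by exact_mod_cast hnu.ne'
  have hm' : (m:ℂ) ≠ 0 := by exact_mod_cast hm.ne'
  have hnz : ∀ z : Fin 5 → ℂ, ∃ i, fderiv ℂ W z (Pi.single i 1) ≠ 0 := by
    intro z
    by_cases h3 : z 3 = 0
    · by_cases h4 : z 4 = 0
      · exact ⟨0, by rw [hv0]; simp [h3, h4, hlam.ne', hm.ne']⟩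
      · exact ⟨2, by rw [hv2]; exact mul_ne_zero hnu' h4⟩
    · exact ⟨1, by rw [hv1]; exact mul_ne_zero hmu' h3⟩
  constructor
  · intro z
    obtain ⟨i, hi⟩ := hnz z
    rw [hV]
    have h1 : 0 < ‖fderiv ℂ W z (Pi.single i 1)‖ ^ 2 :=
      pow_pos (norm_pos_iff.mpr hi) 2
    refine lt_of_lt_of_le h1 ?_
    exact Finset.single_le_sum (f := fun j => ‖fderiv ℂ W z (Pi.single j 1)‖ ^ 2)
      (fun j _ => by positivity) (Finset.mem_univ i)
  · rintro ⟨z, hz⟩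
    obtain ⟨i, hi⟩ := hnz z
    exact hi (hz i)
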